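/- With S_h = (1/(1-q^2)) binom{n}{h}_{q^4} ∏_{j=1}^{n-h-1}(1+q^{4j-1}) ∏_{r=1}^{h-1}(1+q^{4r-1})(q+1)^2 for h>0, and C_m, b_m as defined, one has the identity C_{2h+1} b_{k-h} + C_{2h} b_{n-k-h+1} = S_h (q^{4h} - q^{4(n-h)})(q^{2n-2k} + q^{2k-2n-1}) for 0 < h < k ≤ n. -/

import Mathlib

noncomputable section

open RatFunc Finset

/-- The Gaussian binomial coefficient binom{n}{h} in the variable q⁴:
∏_{i=0}^{h-1} (1 - (q⁴)^{n-i}) / (1 - (q⁴)^{i+1}). -/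
def gb (n h : ℕ) : RatFunc ℚ :=
  (∏ i ∈ Finset.range h, (1 - (X : RatFunc ℚ) ^ (4 * ((n : ℤ) - i)))) /
    ∏ i ∈ Finset.range h, (1 - (X : RatFunc ℚ) ^ (4 * ((i : ℤ) + 1)))

/-- b_m(q) = (q+1) q^{2-2m} (1 - q^{4m-2})/(1-q^2). -/
def bRF (m : ℤ) : RatFunc ℚ :=
  ((X : RatFunc ℚ) + 1) * X ^ (2 - 2 * m) * (1 - X ^ (4 * m - 2)) / (1 - X ^ (2 : ℤ))

/-- c_m = (1-q^{2m})/(1-q^2) · q^{1-2n} (1 + q^{4n-2m+1}). -/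
def cRF (n m : ℕ) : RatFunc ℚ :=
  (1 - (X : RatFunc ℚ) ^ (2 * (m : ℤ))) / (1 - X ^ (2 : ℤ)) * X ^ (1 - 2 * (n : ℤ)) *
    (1 + X ^ (4 * (n : ℤ) - 2 * m + 1))

/-- C_{2h+1} = binom{n}{h}_{q⁴} ∏_{j=1}^{h}(1+q^{4j-1}) ∏_{r=1}^{n-h-1}(1+q^{4r-1}) q^{2(n-h)-1}(q+1),
    C_{2k}   = binom{n}{k}_{q⁴} ∏_{j=1}^{n-k}(1+q^{4j-1}) ∏_{r=1}^{k-1}(1+q^{4r-1}) q^{2k-1}(q+1). -/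
def CB (n m : ℕ) : RatFunc ℚ :=
  if m % 2 = 0 then
    gb n (m / 2) * (∏ j ∈ Finset.Icc 1 (n - m / 2), (1 + (X : RatFunc ℚ) ^ (4 * (j : ℤ) - 1))) *
      (∏ r ∈ Finset.Icc 1 (m / 2 - 1), (1 + (X : RatFunc ℚ) ^ (4 * (r : ℤ) - 1))) *
      X ^ (2 * ((m / 2 : ℕ) : ℤ) - 1) * (X + 1)
  else
    gb n (m / 2) * (∏ j ∈ Finset.Icc 1 (m / 2), (1 + (X : RatFunc ℚ) ^ (4 * (j : ℤ) - 1))) *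
      (∏ r ∈ Finset.Icc 1 (n - m / 2 - 1), (1 + (X : RatFunc ℚ) ^ (4 * (r : ℤ) - 1))) *
      X ^ (2 * ((n : ℤ) - (m / 2 : ℕ)) - 1) * (X + 1)


lemma key7 (N K H : ℤ) :
    (1+(X:RatFunc ℚ)^(4*H-1)) * X^(2*(N-H)-1) * ((X+1) * X^(2-2*(K-H)) * (1-X^(4*(K-H)-2)))
    + (1+X^(4*(N-H)-1)) * X^(2*H-1) * ((X+1) * X^(2-2*(N-K-H+1)) * (1-X^(4*(N-K-H+1)-2)))
    = (X+1) * (X^(4*H) - X^(4*(N-H))) * (X^(2*N-2*K)+X^(2*K-2*N-1)) := by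
  have hX : (X:RatFunc ℚ) ≠ 0 := RatFunc.X_ne_zero
  obtain ⟨u, hU⟩ : ∃ u, (X:RatFunc ℚ)^H = u := ⟨_, rfl⟩
  obtain ⟨v, hV⟩ : ∃ v, (X:RatFunc ℚ)^N = v := ⟨_, rfl⟩
  obtain ⟨w, hW⟩ : ∃ w, (X:RatFunc ℚ)^K = w := ⟨_, rfl⟩
  have hu : u ≠ 0 := hU ▸ zpow_ne_zero _ hX
  have hv : v ≠ 0 := hV ▸ zpow_ne_zero _ hX
  have hw : w ≠ 0 := hW ▸ zpow_ne_zero _ hX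
  have hM : ∀ a b c d : ℕ, (X:RatFunc ℚ)^((a:ℤ)*H + b*N + c*K + d) = u^a * v^b * w^c * X^d := by
    intro a b c d
    rw [← hU, ← hV, ← hW, zpow_add₀ hX, zpow_add₀ hX, zpow_add₀ hX,
      mul_comm (a:ℤ) H, mul_comm (b:ℤ) N, mul_comm (c:ℤ) K, zpow_mul, zpow_mul, zpow_mul,
      zpow_natCast, zpow_natCast, zpow_natCast, zpow_natCast]
  have hD : ∀ (a b c d a' b' c' d' : ℕ) (e : ℤ),
      e = ((a:ℤ)*H+b*N+c*K+d) - ((a':ℤ)*H+b'*N+c'*K+d') →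
      (X:RatFunc ℚ)^e = (u^a*v^b*w^c*X^d) / (u^a'*v^b'*w^c'*X^d') := by
    intro a b c d a' b' c' d' e he
    rw [he, zpow_sub₀ hX, hM, hM]
  rw [hD 4 0 0 0 0 0 0 1 (4*H-1) (by push_cast; ring),
      hD 0 2 0 0 2 0 0 1 (2*(N-H)-1) (by push_cast; ring),
      hD 2 0 0 2 0 0 2 0 (2-2*(K-H)) (by push_cast; ring),
      hD 0 0 4 0 4 0 0 2 (4*(K-H)-2) (by push_cast; ring),
      hD 0 4 0 0 4 0 0 1 (4*(N-H)-1) (by push_cast; ring),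
      hD 2 0 0 0 0 0 0 1 (2*H-1) (by push_cast; ring),
      hD 2 0 2 0 0 2 0 0 (2-2*(N-K-H+1)) (by push_cast; ring),
      hD 0 4 0 2 4 0 4 0 (4*(N-K-H+1)-2) (by push_cast; ring),
      hD 4 0 0 0 0 0 0 0 (4*H) (by push_cast; ring),
      hD 0 4 0 0 4 0 0 0 (4*(N-H)) (by push_cast; ring),
      hD 0 2 0 0 0 0 2 0 (2*N-2*K) (by push_cast; ring),
      hD 0 0 2 0 0 2 0 1 (2*K-2*N-1) (by push_cast; ring)]
  simp only [pow_zero, mul_one, one_mul, pow_one]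
  field_simp
  ring

/-- C_{2h+1} b_{k-h} + C_{2h} b_{n-k-h+1} = S_h (q^{4h} - q^{4(n-h)})(q^{2n-2k} + q^{2k-2n-1}),
where S_h = (1/(1-q²)) binom{n}{h}_{q⁴} ∏_{j=1}^{n-h-1}(1+q^{4j-1}) ∏_{r=1}^{h-1}(1+q^{4r-1}) (q+1)². -/
theorem stmt7 (n k h : ℕ) (h1 : 0 < h) (h2 : h < k) (h3 : k ≤ n) :
    CB n (2 * h + 1) * bRF ((k : ℤ) - h) + CB n (2 * h) * bRF ((n : ℤ) - k - h + 1) =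
      (1 / (1 - (X : RatFunc ℚ) ^ (2 : ℤ)) * gb n h *
          (∏ j ∈ Finset.Icc 1 (n - h - 1), (1 + (X : RatFunc ℚ) ^ (4 * (j : ℤ) - 1))) *
          (∏ r ∈ Finset.Icc 1 (h - 1), (1 + (X : RatFunc ℚ) ^ (4 * (r : ℤ) - 1))) * (X + 1) ^ 2) *
        ((X : RatFunc ℚ) ^ (4 * (h : ℤ)) - X ^ (4 * ((n : ℤ) - h))) *
        ((X : RatFunc ℚ) ^ (2 * (n : ℤ) - 2 * k) + X ^ (2 * (k : ℤ) - 2 * n - 1)) := by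
  have hX : (X:RatFunc ℚ) ≠ 0 := RatFunc.X_ne_zero
  have e1 : (2*h+1) % 2 = 1 := by omega
  have e2 : (2*h) % 2 = 0 := by omega
  have e3 : (2*h+1) / 2 = h := by omega
  have e4 : (2*h) / 2 = h := by omega
  have hh : h = (h - 1) + 1 := by omega
  have hnh : n - h = (n - h - 1) + 1 := by omega
  have p1 : (∏ j ∈ Finset.Icc 1 h, (1 + (X : RatFunc ℚ) ^ (4 * (j : ℤ) - 1)))
      = (∏ r ∈ Finset.Icc 1 (h - 1), (1 + (X : RatFunc ℚ) ^ (4 * (r : ℤ) - 1)))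
        * (1 + (X : RatFunc ℚ) ^ (4 * (h : ℤ) - 1)) := by
    conv_lhs => rw [hh]
    rw [Finset.prod_Icc_succ_top (by omega), ← hh]
  have p2 : (∏ j ∈ Finset.Icc 1 (n - h), (1 + (X : RatFunc ℚ) ^ (4 * (j : ℤ) - 1)))
      = (∏ r ∈ Finset.Icc 1 (n - h - 1), (1 + (X : RatFunc ℚ) ^ (4 * (r : ℤ) - 1)))
        * (1 + (X : RatFunc ℚ) ^ (4 * ((n : ℤ) - (h : ℤ)) - 1)) := by
    conv_lhs => rw [hnh]
    rw [Finset.prod_Icc_succ_top (by omega), ← hnh, Nat.cast_sub (by omega : h ≤ n)]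
  simp only [CB, e1, e2, e3, e4, if_true, if_false, reduceCtorEq, Nat.one_ne_zero, bRF, p1, p2]
  have K := key7 (n:ℤ) (k:ℤ) (h:ℤ)
  linear_combination (gb n h
      * (∏ j ∈ Finset.Icc 1 (n - h - 1), (1 + (X : RatFunc ℚ) ^ (4 * (j : ℤ) - 1)))
      * (∏ r ∈ Finset.Icc 1 (h - 1), (1 + (X : RatFunc ℚ) ^ (4 * (r : ℤ) - 1)))
      * (X + 1) / (1 - (X:RatFunc ℚ) ^ (2:ℤ))) * K
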